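/- Let F be a k-uniform hypergraph with no isolated vertices, H a k-uniform hypergraph, and let G be the b-blowup of H with natural homomorphism ψ: G → H. Suppose φ: H → F is a homomorphism and F is a core. Then for every copy F* of F in G, the image ψ(F*) is a copy of F in H; that is, ψ restricted to V(F*) is injective and maps the edges of F* to the edges of a subgraph of H isomorphic to F. -/
import Mathlib


/-- Let F be a core k-graph with no isolated vertices, H a k-graph, G the
b-blowup of H (vertices V(H) × Fin b, natural homomorphism = first projection),
and φ : H → F a homomorphism. Then for every copy F* of F in G (an injective
ι : V(F) → V(G) sending edges of F to edges of G), the projection is injective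
on V(F*) and maps the edges of F* to edges of H, i.e. ψ(F*) is a copy of F
in H. -/
theorem stmt_17 {VF VH : Type*} [DecidableEq VF] [DecidableEq VH] (k b : ℕ)
    (EF : Finset (Finset VF)) (EH : Finset (Finset VH))
    (huF : ∀ e ∈ EF, e.card = k) (huH : ∀ e ∈ EH, e.card = k)
    (hnoiso : ∀ v : VF, ∃ e ∈ EF, v ∈ e)
    (hcore : ∀ E' ⊆ EF, (∃ ψ : VF → VF, ∀ e ∈ EF, e.image ψ ∈ E') → E' = EF)
    (φ : VH → VF) (hφ : ∀ e ∈ EH, e.image φ ∈ EF)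
    (EG : Finset (Finset (VH × Fin b)))
    (hEG : ∀ e : Finset (VH × Fin b),
      e ∈ EG ↔ (e.card = k ∧ e.image Prod.fst ∈ EH))
    (ι : VF → VH × Fin b) (hι : Function.Injective ι)
    (hcopy : ∀ e ∈ EF, e.image ι ∈ EG) :
    Function.Injective (fun v => (ι v).1) ∧
      ∀ e ∈ EF, e.image (fun v => (ι v).1) ∈ EH := by

  -- projection of edges lands in EH
  have hproj : ∀ e ∈ EF, e.image (fun v => (ι v).1) ∈ EH := by
    intro e he
    have h := (hEG _).mp (hcopy e he)
    have : (e.image ι).image Prod.fst = e.image (fun v => (ι v).1) := by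
      rw [Finset.image_image]; rfl
    rw [this] at h
    exact h.2
  refine ⟨?_, hproj⟩
  -- the endomorphism g of F
  set g : VF → VF := fun v => φ (ι v).1 with hg
  have hgedge : ∀ e ∈ EF, e.image g ∈ EF := by
    intro e he
    have h := hφ _ (hproj e he)
    have : (e.image (fun v => (ι v).1)).image φ = e.image g := by
      rw [Finset.image_image]; rfl
    rwa [this] at h
  -- core: edges are surjective under g
  have hE' : EF.image (fun e => e.image g) = EF := by
    apply hcore
    · intro f hf
      simp only [Finset.mem_image] at hf
      obtain ⟨e, he, rfl⟩ := hf
      exact hgedge e he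
    · exact ⟨g, fun e he => Finset.mem_image_of_mem _ he⟩
  -- g is surjective
  have hsurj : Function.Surjective g := by
    intro v
    obtain ⟨e, he, hv⟩ := hnoiso v
    rw [← hE'] at he
    simp only [Finset.mem_image] at he
    obtain ⟨f, hf, rfl⟩ := he
    simp only [Finset.mem_image] at hv
    obtain ⟨u, _, hu⟩ := hv
    exact ⟨u, hu⟩
  -- VF is finite
  have hfin : Finite VF := by
    have : (Set.univ : Set VF).Finite := by
      apply Set.Finite.subset (EF.biUnion id).finite_toSet
      intro v _
      simp only [Finset.coe_biUnion, Set.mem_iUnion, Finset.mem_coe, id]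
      obtain ⟨e, he, hv⟩ := hnoiso v
      exact ⟨e, he, hv⟩
    exact Set.finite_univ_iff.mp this
  have hginj : Function.Injective g :=
    Finite.injective_iff_surjective.mpr hsurj
  intro u v huv
  apply hginj
  simp only [hg]
  simp only at huv
  rw [huv]
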